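/- Let m > 0, k, l ∈ {1,2,3}, λ ∈ (0,1), let ω : ℝ³ → ℝ³ be measurable, let ψ ∈ L²(ℝ³) and let φ ∈ C_c^∞(ℝ³). Then | ∫_{ℝ³} ∫_{ℝ³} conj(ψ(x)) · (e^{−m|z|}/|z|⁴) · z_k z_l · e^{i ω(x)·z} · (∂_l φ)(x + λz) dz dx | ≤ (4π/m) · ‖ψ‖₂ · ‖∂_l φ‖₂. (Here 4π/m = ∫_{ℝ³} e^{−m|z|}/|z|² dz.) -/

import Mathlib

open Real MeasureTheory
open scoped ENNReal
open Set Metric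

noncomputable section

private lemma lint_radial (f : ℝ → ℝ≥0∞) (hf : Measurable f) :
    ∫⁻ x : EuclideanSpace ℝ (Fin 3), f ‖x‖ =
      (volume : Measure (EuclideanSpace ℝ (Fin 3))).toSphere univ *
        ∫⁻ r in Ioi (0:ℝ), ENNReal.ofReal (r ^ 2) * f r := by
  have hdim : Module.finrank ℝ (EuclideanSpace ℝ (Fin 3)) = 3 := by
    simp [finrank_euclideanSpace]
  calc ∫⁻ x : EuclideanSpace ℝ (Fin 3), f ‖x‖
      = ∫⁻ x in ({0}ᶜ : Set (EuclideanSpace ℝ (Fin 3))), f ‖x‖ := by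
        rw [MeasureTheory.restrict_compl_singleton]
    _ = ∫⁻ x : ({0}ᶜ : Set (EuclideanSpace ℝ (Fin 3))), f ‖(x : EuclideanSpace ℝ (Fin 3))‖
          ∂((volume : Measure (EuclideanSpace ℝ (Fin 3))).comap Subtype.val) := by
        exact (lintegral_subtype_comap (measurableSet_singleton 0).compl
          (fun a => f ‖a‖)).symm
    _ = ∫⁻ p : sphere (0 : EuclideanSpace ℝ (Fin 3)) 1 × Ioi (0:ℝ), f p.2
          ∂(((volume : Measure (EuclideanSpace ℝ (Fin 3))).toSphere).prod
            (MeasureTheory.Measure.volumeIoiPow 2)) := by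
        have h := (MeasureTheory.Measure.measurePreserving_homeomorphUnitSphereProd
            (volume : Measure (EuclideanSpace ℝ (Fin 3)))).lintegral_comp
            (f := fun p : sphere (0 : EuclideanSpace ℝ (Fin 3)) 1 × Ioi (0:ℝ) => f p.2)
            (hf.comp (measurable_subtype_coe.comp measurable_snd))
        rw [hdim] at h
        rw [← h]
        exact lintegral_congr fun x => by
          simp [homeomorphUnitSphereProd_apply_snd_coe]
    _ = (volume : Measure (EuclideanSpace ℝ (Fin 3))).toSphere univ *
          ∫⁻ r : Ioi (0:ℝ), f r ∂(MeasureTheory.Measure.volumeIoiPow 2) := by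
        have hm : AEMeasurable (fun p : sphere (0 : EuclideanSpace ℝ (Fin 3)) 1 × Ioi (0:ℝ) =>
            f ↑p.2) (((volume : Measure (EuclideanSpace ℝ (Fin 3))).toSphere).prod
              (MeasureTheory.Measure.volumeIoiPow 2)) :=
          (hf.comp (measurable_subtype_coe.comp measurable_snd)).aemeasurable
        rw [MeasureTheory.lintegral_prod
          (fun p : sphere (0 : EuclideanSpace ℝ (Fin 3)) 1 × Ioi (0:ℝ) => f ↑p.2) hm]
        simp [lintegral_const, mul_comm]
    _ = (volume : Measure (EuclideanSpace ℝ (Fin 3))).toSphere univ *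
          ∫⁻ r in Ioi (0:ℝ), ENNReal.ofReal (r ^ 2) * f r := by
        congr 1
        rw [MeasureTheory.Measure.volumeIoiPow,
          lintegral_withDensity_eq_lintegral_mul _
            ((measurable_subtype_coe.pow_const 2).ennreal_ofReal)
            (show Measurable (fun r : Ioi (0:ℝ) => f ↑r) from hf.comp measurable_subtype_coe)]
        exact lintegral_subtype_comap measurableSet_Ioi
          (fun r : ℝ => ENNReal.ofReal (r ^ 2) * f r)

end

private lemma ball_vol :
    (volume : Measure (EuclideanSpace ℝ (Fin 3))) (ball 0 1) = ENNReal.ofReal (4 * π / 3) := by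
  rw [EuclideanSpace.volume_ball]
  have hG : Real.Gamma ((Fintype.card (Fin 3) : ℝ) / 2 + 1) = 3 / 4 * Real.sqrt π := by
    have h1 : ((Fintype.card (Fin 3) : ℝ)) / 2 + 1 = 3 / 2 + 1 := by norm_num
    rw [h1, Real.Gamma_add_one (by norm_num)]
    have h2 : (3:ℝ) / 2 = 1 / 2 + 1 := by norm_num
    rw [h2, Real.Gamma_add_one (by norm_num), Real.Gamma_one_half_eq]
    ring
  rw [hG]
  have hs : Real.sqrt π ^ Fintype.card (Fin 3) = π * Real.sqrt π := by
    have : Real.sqrt π ^ Fintype.card (Fin 3) = Real.sqrt π ^ 2 * Real.sqrt π := by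
      norm_num; ring
    rw [this, Real.sq_sqrt pi_nonneg]
  rw [hs]
  have hsne : Real.sqrt π ≠ 0 := by
    positivity
  simp only [ENNReal.ofReal_one, one_pow, one_mul]
  congr 1
  field_simp

private lemma toSphere_univ :
    (volume : Measure (EuclideanSpace ℝ (Fin 3))).toSphere univ = ENNReal.ofReal (4 * π) := by
  rw [MeasureTheory.Measure.toSphere_apply_univ, ball_vol]
  have hdim : Module.finrank ℝ (EuclideanSpace ℝ (Fin 3)) = 3 := by
    simp [finrank_euclideanSpace]
  rw [hdim]
  rw [show ((3:ℕ) : ℝ≥0∞) = ENNReal.ofReal 3 by simp, ← ENNReal.ofReal_mul (by norm_num)]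
  congr 1
  ring

private lemma lint_w (m : ℝ) (hm : 0 < m) :
    ∫⁻ z : EuclideanSpace ℝ (Fin 3), ENNReal.ofReal (Real.exp (-m * ‖z‖) / ‖z‖ ^ 2) =
      ENNReal.ofReal (4 * π / m) := by
  have hf : Measurable fun r : ℝ => ENNReal.ofReal (Real.exp (-m * r) / r ^ 2) := by
    exact ((Real.measurable_exp.comp (measurable_id.const_mul (-m))).div
      (measurable_id.pow_const 2)).ennreal_ofReal
  rw [lint_radial (fun r => ENNReal.ofReal (Real.exp (-m * r) / r ^ 2)) hf, toSphere_univ]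
  have h1 : ∫⁻ r in Ioi (0:ℝ), ENNReal.ofReal (r ^ 2) *
      ENNReal.ofReal (Real.exp (-m * r) / r ^ 2) =
      ∫⁻ r in Ioi (0:ℝ), ENNReal.ofReal (Real.exp (-m * r)) := by
    refine setLIntegral_congr_fun measurableSet_Ioi (fun r hr => ?_)
    rw [← ENNReal.ofReal_mul (sq_nonneg r)]
    congr 1
    rw [mul_comm, div_mul_cancel₀ _ (pow_ne_zero 2 (mem_Ioi.mp hr).ne')]
  rw [h1]
  have h2 : ∫ r in Ioi (0:ℝ), Real.exp (-m * r) = m⁻¹ := by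
    have h := MeasureTheory.integral_comp_mul_left_Ioi (fun x => Real.exp (-x)) 0 hm
    simp only [mul_zero, integral_exp_neg_Ioi, neg_zero, Real.exp_zero, smul_eq_mul,
      mul_one] at h
    simpa [neg_mul] using h
  rw [← MeasureTheory.ofReal_integral_eq_lintegral_ofReal (exp_neg_integrableOn_Ioi 0 hm)
      (Filter.Eventually.of_forall fun r => (Real.exp_pos _).le), h2,
    ← ENNReal.ofReal_mul (by positivity)]
  rfl

private lemma cs_bound (f h : EuclideanSpace ℝ (Fin 3) → ℂ)
    (hf : AEStronglyMeasurable f volume) (hh : AEStronglyMeasurable h volume) :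
    ∫⁻ x, (‖f x‖₊ : ℝ≥0∞) * (‖h x‖₊ : ℝ≥0∞) ≤ eLpNorm f 2 volume * eLpNorm h 2 volume := by
  have hpq : Real.HolderConjugate 2 2 := Real.HolderConjugate.two_two
  have hcs := ENNReal.lintegral_mul_le_Lp_mul_Lq volume hpq hf.enorm hh.enorm
  simp only [Pi.mul_apply] at hcs
  rw [eLpNorm_eq_lintegral_rpow_enorm_toReal (by norm_num) (by norm_num),
    eLpNorm_eq_lintegral_rpow_enorm_toReal (by norm_num) (by norm_num)]
  simp at hcs ⊢
  exact hcs

private lemma double_bound (lam : ℝ) (w : EuclideanSpace ℝ (Fin 3) → ℝ)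
    (hw0 : ∀ z, 0 ≤ w z) (hwm : Measurable w)
    (ψ g : EuclideanSpace ℝ (Fin 3) → ℂ) (hψ : MemLp ψ 2 volume)
    (hgc : Continuous g) (hgm : MemLp g 2 volume)
    (F : EuclideanSpace ℝ (Fin 3) → EuclideanSpace ℝ (Fin 3) → ℂ)
    (key : ∀ x z, ‖F x z‖ ≤ w z * (‖ψ x‖ * ‖g (x + lam • z)‖)) :
    (‖∫ x : EuclideanSpace ℝ (Fin 3), ∫ z : EuclideanSpace ℝ (Fin 3), F x z‖₊ : ℝ≥0∞) ≤
      (∫⁻ z : EuclideanSpace ℝ (Fin 3), ENNReal.ofReal (w z)) *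
        (eLpNorm ψ 2 volume * eLpNorm g 2 volume) := by
  set S : ℝ≥0∞ := eLpNorm ψ 2 volume * eLpNorm g 2 volume with hSdef
  have hSne : S ≠ ∞ := ENNReal.mul_ne_top hψ.2.ne hgm.2.ne
  have stepA : (‖∫ x : EuclideanSpace ℝ (Fin 3), ∫ z : EuclideanSpace ℝ (Fin 3),
      F x z‖₊ : ℝ≥0∞) ≤
      ∫⁻ x : EuclideanSpace ℝ (Fin 3), ∫⁻ z : EuclideanSpace ℝ (Fin 3),
        ENNReal.ofReal (w z) * ((‖ψ x‖₊ : ℝ≥0∞) * (‖g (x + lam • z)‖₊ : ℝ≥0∞)) := by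
    refine le_trans (enorm_integral_le_lintegral_enorm _) (lintegral_mono fun x => ?_)
    refine le_trans (enorm_integral_le_lintegral_enorm _) (lintegral_mono fun z => ?_)
    rw [← ofReal_norm]
    calc ENNReal.ofReal ‖F x z‖ ≤ ENNReal.ofReal (w z * (‖ψ x‖ * ‖g (x + lam • z)‖)) :=
          ENNReal.ofReal_le_ofReal (key x z)
      _ = ENNReal.ofReal (w z) * ((‖ψ x‖₊ : ℝ≥0∞) * (‖g (x + lam • z)‖₊ : ℝ≥0∞)) := by
          rw [ENNReal.ofReal_mul (hw0 z), ENNReal.ofReal_mul (norm_nonneg _),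
            ofReal_norm, ofReal_norm, enorm_eq_nnnorm, enorm_eq_nnnorm]
  have hGmeas : AEMeasurable
      (Function.uncurry fun x z : EuclideanSpace ℝ (Fin 3) =>
        ENNReal.ofReal (w z) * ((‖ψ x‖₊ : ℝ≥0∞) * (‖g (x + lam • z)‖₊ : ℝ≥0∞)))
      ((volume : Measure (EuclideanSpace ℝ (Fin 3))).prod volume) := by
    show AEMeasurable (fun p : EuclideanSpace ℝ (Fin 3) × EuclideanSpace ℝ (Fin 3) =>
      ENNReal.ofReal (w p.2) * ((‖ψ p.1‖₊ : ℝ≥0∞) * (‖g (p.1 + lam • p.2)‖₊ : ℝ≥0∞))) _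
    refine AEMeasurable.mul
      (f := fun p : EuclideanSpace ℝ (Fin 3) × EuclideanSpace ℝ (Fin 3) => ENNReal.ofReal (w p.2))
      (g := fun p : EuclideanSpace ℝ (Fin 3) × EuclideanSpace ℝ (Fin 3) =>
        (‖ψ p.1‖₊ : ℝ≥0∞) * (‖g (p.1 + lam • p.2)‖₊ : ℝ≥0∞)) ?_
      (AEMeasurable.mul
        (f := fun p : EuclideanSpace ℝ (Fin 3) × EuclideanSpace ℝ (Fin 3) => (‖ψ p.1‖₊ : ℝ≥0∞))
        (g := fun p : EuclideanSpace ℝ (Fin 3) × EuclideanSpace ℝ (Fin 3) =>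
          (‖g (p.1 + lam • p.2)‖₊ : ℝ≥0∞)) ?_ ?_)
    · exact ((hwm.comp measurable_snd).ennreal_ofReal).aemeasurable
    · exact hψ.1.comp_fst.enorm
    · exact ((hgc.comp (continuous_fst.add (continuous_snd.const_smul
        lam))).measurable.enorm).aemeasurable
  have stepB := lintegral_lintegral_swap hGmeas
  have stepC : ∀ z : EuclideanSpace ℝ (Fin 3),
      (∫⁻ x : EuclideanSpace ℝ (Fin 3),
        ENNReal.ofReal (w z) * ((‖ψ x‖₊ : ℝ≥0∞) * (‖g (x + lam • z)‖₊ : ℝ≥0∞))) ≤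
        ENNReal.ofReal (w z) * S := by
    intro z
    rw [lintegral_const_mul' _ _ ENNReal.ofReal_ne_top]
    refine mul_le_mul_right ?_ _
    have hgz : Continuous fun x : EuclideanSpace ℝ (Fin 3) => g (x + lam • z) :=
      hgc.comp (continuous_id.add continuous_const)
    have htrans : eLpNorm (fun x : EuclideanSpace ℝ (Fin 3) => g (x + lam • z)) 2 volume =
        eLpNorm g 2 volume :=
      eLpNorm_comp_measurePreserving hgm.1 (measurePreserving_add_right volume (lam • z))
    calc ∫⁻ x : EuclideanSpace ℝ (Fin 3), (‖ψ x‖₊ : ℝ≥0∞) * (‖g (x + lam • z)‖₊ : ℝ≥0∞)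
        ≤ eLpNorm ψ 2 volume *
            eLpNorm (fun x : EuclideanSpace ℝ (Fin 3) => g (x + lam • z)) 2 volume :=
          cs_bound ψ (fun x => g (x + lam • z)) hψ.1 hgz.aestronglyMeasurable
      _ = S := by rw [htrans]
  calc (‖∫ x : EuclideanSpace ℝ (Fin 3), ∫ z : EuclideanSpace ℝ (Fin 3), F x z‖₊ : ℝ≥0∞)
      ≤ ∫⁻ x : EuclideanSpace ℝ (Fin 3), ∫⁻ z : EuclideanSpace ℝ (Fin 3),
          ENNReal.ofReal (w z) * ((‖ψ x‖₊ : ℝ≥0∞) * (‖g (x + lam • z)‖₊ : ℝ≥0∞)) := stepA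
    _ = ∫⁻ z : EuclideanSpace ℝ (Fin 3), ∫⁻ x : EuclideanSpace ℝ (Fin 3),
          ENNReal.ofReal (w z) * ((‖ψ x‖₊ : ℝ≥0∞) * (‖g (x + lam • z)‖₊ : ℝ≥0∞)) := stepB
    _ ≤ ∫⁻ z : EuclideanSpace ℝ (Fin 3), ENNReal.ofReal (w z) * S := lintegral_mono stepC
    _ = (∫⁻ z : EuclideanSpace ℝ (Fin 3), ENNReal.ofReal (w z)) * S :=
        lintegral_mul_const' S _ hSne

/-- Let `m > 0`, `k, l ∈ {1,2,3}`, `λ ∈ (0,1)`, let `ω : ℝ³ → ℝ³` be measurable, let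
`ψ ∈ L²(ℝ³)` and `φ ∈ C_c^∞(ℝ³)`. Then
`|∫∫ conj(ψ(x)) (e^{-m|z|}/|z|⁴) z_k z_l e^{i ω(x)·z} (∂_l φ)(x + λz) dz dx|
  ≤ (4π/m) ‖ψ‖₂ ‖∂_l φ‖₂`. -/
theorem taylor_remainder_form_bound (m : ℝ) (hm : 0 < m) (k l : Fin 3) (lam : ℝ)
    (hlam : lam ∈ Set.Ioo (0 : ℝ) 1)
    (ω : EuclideanSpace ℝ (Fin 3) → EuclideanSpace ℝ (Fin 3)) (hω : Measurable ω)
    (ψ φ : EuclideanSpace ℝ (Fin 3) → ℂ) (hψ : MemLp ψ 2 volume)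
    (hφ : ContDiff ℝ (⊤ : ℕ∞) φ) (hφc : HasCompactSupport φ) :
    ‖∫ x : EuclideanSpace ℝ (Fin 3), ∫ z : EuclideanSpace ℝ (Fin 3),
        (starRingEnd ℂ) (ψ x) *
          ((Real.exp (-m * ‖z‖) / ‖z‖ ^ 4 * z k * z l : ℝ) : ℂ) *
          Complex.exp (Complex.I * ((inner ℝ (ω x) z : ℝ) : ℂ)) *
          fderiv ℝ φ (x + lam • z) (EuclideanSpace.single l 1)‖ ≤
      4 * π / m * (eLpNorm ψ 2 volume).toReal *
        (eLpNorm (fun x => fderiv ℝ φ x (EuclideanSpace.single l 1)) 2 volume).toReal := by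
  have hgc : Continuous fun x : EuclideanSpace ℝ (Fin 3) =>
      fderiv ℝ φ x (EuclideanSpace.single l 1) :=
    ((hφ.fderiv_right (m := 0) (by simp)).continuous).clm_apply continuous_const
  have hgsupp : HasCompactSupport fun x : EuclideanSpace ℝ (Fin 3) =>
      fderiv ℝ φ x (EuclideanSpace.single l 1) :=
    (hφc.fderiv ℝ).comp_left
      (g := fun L : EuclideanSpace ℝ (Fin 3) →L[ℝ] ℂ => L (EuclideanSpace.single l 1)) rfl
  have hgm : MemLp (fun x : EuclideanSpace ℝ (Fin 3) =>
      fderiv ℝ φ x (EuclideanSpace.single l 1)) 2 volume :=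
    hgc.memLp_of_hasCompactSupport hgsupp
  have hw0 : ∀ z : EuclideanSpace ℝ (Fin 3), 0 ≤ Real.exp (-m * ‖z‖) / ‖z‖ ^ 2 := fun z => by
    positivity
  have hwm : Measurable fun z : EuclideanSpace ℝ (Fin 3) => Real.exp (-m * ‖z‖) / ‖z‖ ^ 2 :=
    (Real.measurable_exp.comp (measurable_norm.const_mul (-m))).div (measurable_norm.pow_const 2)
  have hcoord : ∀ (j : Fin 3) (z : EuclideanSpace ℝ (Fin 3)), |z j| ≤ ‖z‖ := by
    intro j z
    have h := abs_real_inner_le_norm (EuclideanSpace.single j (1:ℝ)) z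
    rw [EuclideanSpace.inner_single_left] at h
    simpa [EuclideanSpace.norm_single] using h
  have habs : ∀ z : EuclideanSpace ℝ (Fin 3),
      |Real.exp (-m * ‖z‖) / ‖z‖ ^ 4 * z k * z l| ≤ Real.exp (-m * ‖z‖) / ‖z‖ ^ 2 := by
    intro z
    rcases eq_or_ne z 0 with rfl | hz
    · have h0 : ((0 : EuclideanSpace ℝ (Fin 3)) l) = 0 := rfl
      rw [h0, mul_zero, abs_zero]
      exact hw0 0
    · have hz' : (0:ℝ) < ‖z‖ := norm_pos_iff.mpr hz
      calc |Real.exp (-m * ‖z‖) / ‖z‖ ^ 4 * z k * z l|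
          = Real.exp (-m * ‖z‖) / ‖z‖ ^ 4 * |z k| * |z l| := by
            rw [abs_mul, abs_mul, abs_div, abs_of_pos (Real.exp_pos _),
              abs_of_pos (pow_pos hz' 4)]
        _ ≤ Real.exp (-m * ‖z‖) / ‖z‖ ^ 4 * ‖z‖ * ‖z‖ := by
            have hnn : (0:ℝ) ≤ Real.exp (-m * ‖z‖) / ‖z‖ ^ 4 := by positivity
            have h1 := hcoord k z
            have h2 := hcoord l z
            have h3 : Real.exp (-m * ‖z‖) / ‖z‖ ^ 4 * |z k| ≤
                Real.exp (-m * ‖z‖) / ‖z‖ ^ 4 * ‖z‖ := by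
              exact mul_le_mul_of_nonneg_left h1 hnn
            exact mul_le_mul h3 h2 (abs_nonneg _) (by positivity)
        _ = Real.exp (-m * ‖z‖) / ‖z‖ ^ 2 := by
            field_simp
  have key : ∀ x z : EuclideanSpace ℝ (Fin 3),
      ‖(starRingEnd ℂ) (ψ x) *
          ((Real.exp (-m * ‖z‖) / ‖z‖ ^ 4 * z k * z l : ℝ) : ℂ) *
          Complex.exp (Complex.I * ((inner ℝ (ω x) z : ℝ) : ℂ)) *
          fderiv ℝ φ (x + lam • z) (EuclideanSpace.single l 1)‖ ≤
        Real.exp (-m * ‖z‖) / ‖z‖ ^ 2 *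
          (‖ψ x‖ * ‖fderiv ℝ φ (x + lam • z) (EuclideanSpace.single l 1)‖) := by
    intro x z
    have h2 : ‖Complex.exp (Complex.I * ((inner ℝ (ω x) z : ℝ) : ℂ))‖ = 1 := by
      rw [Complex.norm_exp]
      simp
    have hstar : ‖(starRingEnd ℂ) (ψ x)‖ = ‖ψ x‖ := RCLike.norm_conj _
    rw [norm_mul, norm_mul, norm_mul, h2, mul_one, hstar, Complex.norm_real, Real.norm_eq_abs]
    calc ‖ψ x‖ * |Real.exp (-m * ‖z‖) / ‖z‖ ^ 4 * z k * z l| *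
          ‖fderiv ℝ φ (x + lam • z) (EuclideanSpace.single l 1)‖
        ≤ ‖ψ x‖ * (Real.exp (-m * ‖z‖) / ‖z‖ ^ 2) *
          ‖fderiv ℝ φ (x + lam • z) (EuclideanSpace.single l 1)‖ := by
          have := habs z
          have hb := mul_le_mul_of_nonneg_left this (norm_nonneg (ψ x))
          exact mul_le_mul_of_nonneg_right hb (norm_nonneg _)
      _ = Real.exp (-m * ‖z‖) / ‖z‖ ^ 2 *
          (‖ψ x‖ * ‖fderiv ℝ φ (x + lam • z) (EuclideanSpace.single l 1)‖) := by ring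
  have main := double_bound lam (fun z => Real.exp (-m * ‖z‖) / ‖z‖ ^ 2) hw0 hwm ψ
    (fun x => fderiv ℝ φ x (EuclideanSpace.single l 1)) hψ hgc hgm
    (fun x z => (starRingEnd ℂ) (ψ x) *
        ((Real.exp (-m * ‖z‖) / ‖z‖ ^ 4 * z k * z l : ℝ) : ℂ) *
        Complex.exp (Complex.I * ((inner ℝ (ω x) z : ℝ) : ℂ)) *
        fderiv ℝ φ (x + lam • z) (EuclideanSpace.single l 1)) key
  rw [lint_w m hm] at main
  have hfin : ENNReal.ofReal (4 * π / m) *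
      (eLpNorm ψ 2 volume *
        eLpNorm (fun x => fderiv ℝ φ x (EuclideanSpace.single l 1)) 2 volume) ≠ ∞ :=
    ENNReal.mul_ne_top ENNReal.ofReal_ne_top (ENNReal.mul_ne_top hψ.2.ne hgm.2.ne)
  have hto := ENNReal.toReal_mono hfin main
  rw [ENNReal.coe_toReal, coe_nnnorm, ENNReal.toReal_mul, ENNReal.toReal_mul,
    ENNReal.toReal_ofReal (by positivity)] at hto
  calc ‖∫ x : EuclideanSpace ℝ (Fin 3), ∫ z : EuclideanSpace ℝ (Fin 3),
        (starRingEnd ℂ) (ψ x) *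
          ((Real.exp (-m * ‖z‖) / ‖z‖ ^ 4 * z k * z l : ℝ) : ℂ) *
          Complex.exp (Complex.I * ((inner ℝ (ω x) z : ℝ) : ℂ)) *
          fderiv ℝ φ (x + lam • z) (EuclideanSpace.single l 1)‖
      ≤ 4 * π / m * ((eLpNorm ψ 2 volume).toReal *
          (eLpNorm (fun x => fderiv ℝ φ x (EuclideanSpace.single l 1)) 2 volume).toReal) := hto
    _ = 4 * π / m * (eLpNorm ψ 2 volume).toReal *
          (eLpNorm (fun x => fderiv ℝ φ x (EuclideanSpace.single l 1)) 2 volume).toReal := by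
        ring
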